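/- Let n ≥ 2 and let α₁,…,α_g, β₁,…,β_g ∈ F_n satisfy ∏_{i=1}^g [α_i, y_i]·[x_i, β_i] ∈ F_{n+2}. Then the endomorphism h of F determined by h(x_i) = x_i·α_i and h(y_i) = y_i·β_i induces an automorphism of F/F_{n+1} which belongs to A₀(F/F_{n+1}) (i.e., h(ω_g) ≡ ω_g modulo F_{n+2}) and which induces the identity automorphism of F/F_n. -/

import Mathlib

open scoped commutatorElement


/-!
`Fg g` is the free group `F` on `2g` generators `x₁,…,x_g,y₁,…,y_g`
(`X g i = x_i`, `Y g i = y_i`), `omegaG g = [x₁,y₁]⋯[x_g,y_g]`.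
Paper convention: `F_k = (⊤ : Subgroup (Fg g)).lowerCentralSeries (k-1)`, and
`Q g k = F/F_k`.  `IsA0 g k φ` says that the automorphism `φ` of `F/F_k`
lies in `A₀(F/F_k)`: some endomorphism of `F` lifting `φ` sends `ω_g`
into `ω_g·F_{k+1}`.
-/

section AuxLemmas

variable {G : Type*} [Group G]

open Subgroup

lemma lcs_succ_eq (k : ℕ) :
    (⊤ : Subgroup G).lowerCentralSeries (k + 1) = ⁅(⊤ : Subgroup G).lowerCentralSeries k, (⊤ : Subgroup G)⁆ := rfl

lemma map_comm_eq_bot_iff (N : Subgroup G) [N.Normal] (H K : Subgroup G) :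
    ⁅Subgroup.map (QuotientGroup.mk' N) H, Subgroup.map (QuotientGroup.mk' N) K⁆ = ⊥ ↔
      ⁅H, K⁆ ≤ N := by
  rw [← Subgroup.map_commutator, Subgroup.map_eq_bot_iff, QuotientGroup.ker_mk']

lemma lcs_comm_le : ∀ (j i : ℕ),
    ⁅(⊤ : Subgroup G).lowerCentralSeries i, (⊤ : Subgroup G).lowerCentralSeries j⁆ ≤ (⊤ : Subgroup G).lowerCentralSeries (i + j + 1)
  | 0, i => le_of_eq (lcs_succ_eq i).symm
  | (j+1), i => by
    rw [← map_comm_eq_bot_iff ((⊤ : Subgroup G).lowerCentralSeries (i + (j+1) + 1))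
      ((⊤ : Subgroup G).lowerCentralSeries i) ((⊤ : Subgroup G).lowerCentralSeries (j+1))]
    rw [lcs_succ_eq j, Subgroup.map_commutator, Subgroup.commutator_comm]
    apply Subgroup.commutator_commutator_eq_bot_of_rotate
    · rw [Subgroup.commutator_comm
        (Subgroup.map (QuotientGroup.mk' ((⊤ : Subgroup G).lowerCentralSeries (i + (j+1) + 1))) ⊤),
        ← Subgroup.map_commutator, ← lcs_succ_eq i, map_comm_eq_bot_iff]
      exact (lcs_comm_le j (i+1)).trans ((⊤ : Subgroup _).lowerCentralSeries_antitone (by omega))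
    · rw [← Subgroup.map_commutator, map_comm_eq_bot_iff]
      calc ⁅⁅(⊤ : Subgroup G).lowerCentralSeries i, (⊤ : Subgroup G).lowerCentralSeries j⁆, (⊤ : Subgroup G)⁆
          ≤ ⁅(⊤ : Subgroup G).lowerCentralSeries (i + j + 1), (⊤ : Subgroup G)⁆ :=
            Subgroup.commutator_mono (lcs_comm_le j i) le_rfl
        _ = (⊤ : Subgroup G).lowerCentralSeries (i + j + 2) := (lcs_succ_eq _).symm
        _ ≤ _ := (⊤ : Subgroup _).lowerCentralSeries_antitone (by omega)

lemma deg_raise (φ : G →* G) (m : ℕ) (hφ : ∀ a : G, a⁻¹ * φ a ∈ (⊤ : Subgroup G).lowerCentralSeries m) :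
    ∀ k, ∀ e ∈ (⊤ : Subgroup G).lowerCentralSeries k, e⁻¹ * φ e ∈ (⊤ : Subgroup G).lowerCentralSeries (k + m) := by
  intro k
  induction k with
  | zero => intro e _; simpa using hφ e
  | succ k ih =>
    have hnorm : ((⊤ : Subgroup G).lowerCentralSeries (k + 1 + m)).Normal := inferInstance
    let S : Subgroup G :=
      { carrier := {a : G | a⁻¹ * φ a ∈ (⊤ : Subgroup G).lowerCentralSeries (k + 1 + m)}
        one_mem' := by
          simp only [Set.mem_setOf_eq, inv_one, map_one, mul_one]
          exact one_mem _
        mul_mem' := by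
          intro a b ha hb
          simp only [Set.mem_setOf_eq] at *
          have key : (a*b)⁻¹ * φ (a*b) = b⁻¹ * (a⁻¹ * φ a) * b⁻¹⁻¹ * (b⁻¹ * φ b) := by
            rw [map_mul]; group
          rw [key]
          exact mul_mem (hnorm.conj_mem _ ha b⁻¹) hb
        inv_mem' := by
          intro a ha
          simp only [Set.mem_setOf_eq] at *
          have key : (a⁻¹)⁻¹ * φ a⁻¹ = a * (a⁻¹ * φ a)⁻¹ * a⁻¹ := by
            rw [map_inv]; group
          rw [key]
          exact hnorm.conj_mem _ (inv_mem ha) a }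
    intro e he
    have hle : (⊤ : Subgroup G).lowerCentralSeries (k+1) ≤ S := by
      rw [Subgroup.lowerCentralSeries_succ]
      refine (Subgroup.closure_le S).mpr ?_
      rintro x ⟨p, hp, q, -, rfl⟩
      show (p*q*p⁻¹*q⁻¹)⁻¹ * φ (p*q*p⁻¹*q⁻¹) ∈ (⊤ : Subgroup G).lowerCentralSeries (k + 1 + m)
      have hd : p⁻¹ * φ p ∈ (⊤ : Subgroup G).lowerCentralSeries (k + m) := ih p hp
      have hc : q⁻¹ * φ q ∈ (⊤ : Subgroup G).lowerCentralSeries m := hφ q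
      have h1 : φ p = p * (p⁻¹ * φ p) := by group
      have h2 : φ q = q * (q⁻¹ * φ q) := by group
      have expand : (p*q*p⁻¹*q⁻¹)⁻¹ * φ (p*q*p⁻¹*q⁻¹)
          = ((p*q*p⁻¹*q⁻¹)⁻¹ * (p * ⁅p⁻¹ * φ p, q * (q⁻¹ * φ q)⁆ * p⁻¹) * (p*q*p⁻¹*q⁻¹)⁻¹⁻¹)
            * (q * ⁅p, q⁻¹ * φ q⁆ * q⁻¹) := by
        simp only [map_mul, map_inv, commutatorElement_def]
        group
      rw [expand]
      have m1 : ⁅p⁻¹ * φ p, q * (q⁻¹ * φ q)⁆ ∈ (⊤ : Subgroup G).lowerCentralSeries (k + 1 + m) := by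
        have : ⁅p⁻¹ * φ p, q * (q⁻¹ * φ q)⁆ ∈ ⁅(⊤ : Subgroup G).lowerCentralSeries (k + m), (⊤ : Subgroup G)⁆ :=
          Subgroup.commutator_mem_commutator hd (Subgroup.mem_top _)
        rw [← lcs_succ_eq] at this
        exact (⊤ : Subgroup _).lowerCentralSeries_antitone (by omega) this
      have m2 : ⁅p, q⁻¹ * φ q⁆ ∈ (⊤ : Subgroup G).lowerCentralSeries (k + 1 + m) := by
        have : ⁅p, q⁻¹ * φ q⁆ ∈ ⁅(⊤ : Subgroup G).lowerCentralSeries k, (⊤ : Subgroup G).lowerCentralSeries m⁆ :=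
          Subgroup.commutator_mem_commutator hp hc
        exact (⊤ : Subgroup _).lowerCentralSeries_antitone (by omega) (lcs_comm_le m k this)
      exact mul_mem (hnorm.conj_mem _ (hnorm.conj_mem _ m1 p) (p*q*p⁻¹*q⁻¹)⁻¹)
        (hnorm.conj_mem _ m2 q)
    exact hle he

lemma bij_of_unipotent (φ : G →* G) (m N : ℕ) (hm : 1 ≤ m)
    (hbot : (⊤ : Subgroup G).lowerCentralSeries N = ⊥)
    (hφ : ∀ a : G, a⁻¹ * φ a ∈ (⊤ : Subgroup G).lowerCentralSeries m) :
    Function.Bijective φ := by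
  constructor
  · intro a b hab
    have hc : φ (a⁻¹ * b) = 1 := by simp [hab]
    have hmem : ∀ j, a⁻¹ * b ∈ (⊤ : Subgroup G).lowerCentralSeries j := by
      intro j; induction j with
      | zero => exact Subgroup.mem_top _
      | succ j ihj =>
        have := deg_raise φ m hφ j _ ihj
        rw [hc, mul_one] at this
        have h2 : a⁻¹ * b ∈ (⊤ : Subgroup G).lowerCentralSeries (j + m) := by simpa using inv_mem this
        exact (⊤ : Subgroup _).lowerCentralSeries_antitone (by omega) h2
    have := hmem N
    rw [hbot, Subgroup.mem_bot] at this
    exact inv_mul_eq_one.mp this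
  · intro a
    have hmem : ∀ j, ∃ b, (φ b)⁻¹ * a ∈ (⊤ : Subgroup G).lowerCentralSeries j := by
      intro j; induction j with
      | zero => exact ⟨1, Subgroup.mem_top _⟩
      | succ j ihj =>
        obtain ⟨b, hb⟩ := ihj
        refine ⟨b * ((φ b)⁻¹ * a), ?_⟩
        have hd := deg_raise φ m hφ j _ hb
        have key : (φ (b * ((φ b)⁻¹ * a)))⁻¹ * a
            = (((φ b)⁻¹ * a)⁻¹ * φ ((φ b)⁻¹ * a))⁻¹ := by
          simp only [map_mul, map_inv]; group
        rw [key]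
        exact (⊤ : Subgroup _).lowerCentralSeries_antitone (by omega) (inv_mem hd)
    obtain ⟨b, hb⟩ := hmem N
    rw [hbot, Subgroup.mem_bot, inv_mul_eq_one] at hb
    exact ⟨b, hb⟩

lemma lcs_quotient_le (N : Subgroup G) [N.Normal] (k : ℕ) :
    (⊤ : Subgroup (G ⧸ N)).lowerCentralSeries k ≤
      Subgroup.map (QuotientGroup.mk' N) ((⊤ : Subgroup G).lowerCentralSeries k) := by
  induction k with
  | zero =>
    rw [Subgroup.lowerCentralSeries_zero, Subgroup.lowerCentralSeries_zero,
      Subgroup.map_top_of_surjective _ (QuotientGroup.mk'_surjective N)]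
  | succ k ih =>
    rw [lcs_succ_eq, lcs_succ_eq, Subgroup.map_commutator]
    refine Subgroup.commutator_mono ih ?_
    rw [Subgroup.map_top_of_surjective _ (QuotientGroup.mk'_surjective N)]

lemma conj_central {M : Type*} [Group M] {z : M} (hz : z ∈ Subgroup.center M) (g : M) :
    g * z * g⁻¹ = z := by
  rw [Subgroup.mem_center_iff.mp hz g, mul_assoc, mul_inv_cancel, mul_one]

lemma prod_mul_central {M : Type*} [Group M] {ι : Type*} (f c : ι → M)
    (hc : ∀ i, c i ∈ Subgroup.center M) :
    ∀ l : List ι, (l.map fun i => f i * c i).prod = (l.map f).prod * (l.map c).prod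
  | [] => by simp
  | i :: l => by
    simp only [List.map_cons, List.prod_cons, prod_mul_central f c hc l]
    have hcomm : c i * (l.map f).prod = (l.map f).prod * c i :=
      (Subgroup.mem_center_iff.mp (hc i) _).symm
    calc f i * c i * ((l.map f).prod * (l.map c).prod)
        = f i * (c i * (l.map f).prod) * (l.map c).prod := by group
      _ = f i * ((l.map f).prod * c i) * (l.map c).prod := by rw [hcomm]
      _ = f i * (l.map f).prod * (c i * (l.map c).prod) := by group

lemma central_of_lcs (k : ℕ) {z : G} (hz : z ∈ (⊤ : Subgroup G).lowerCentralSeries k) :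
    (QuotientGroup.mk' ((⊤ : Subgroup G).lowerCentralSeries (k+1))) z ∈
      Subgroup.center (G ⧸ (⊤ : Subgroup G).lowerCentralSeries (k+1)) := by
  rw [Subgroup.mem_center_iff]
  intro q
  obtain ⟨b, rfl⟩ := QuotientGroup.mk'_surjective _ q
  rw [← map_mul, ← map_mul]
  have hmem : (b*z)⁻¹ * (z*b) ∈ (⊤ : Subgroup G).lowerCentralSeries (k+1) := by
    have hword : (b*z)⁻¹ * (z*b) = ⁅z⁻¹, b⁻¹⁆ := by
      rw [commutatorElement_def]; group
    rw [hword, lcs_succ_eq]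
    exact Subgroup.commutator_mem_commutator (inv_mem hz) (Subgroup.mem_top _)
  exact QuotientGroup.eq.mpr hmem

end AuxLemmas

abbrev Fg (g : ℕ) := FreeGroup (Fin g × Bool)

def X (g : ℕ) (i : Fin g) : Fg g := FreeGroup.of (i, false)

def Y (g : ℕ) (i : Fin g) : Fg g := FreeGroup.of (i, true)

def omegaG (g : ℕ) : Fg g := ((List.finRange g).map fun i => ⁅X g i, Y g i⁆).prod

/-- `F/F_k` in the paper's indexing of the lower central series. -/
abbrev Q (g k : ℕ) := Fg g ⧸ (⊤ : Subgroup (Fg g)).lowerCentralSeries (k - 1)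

def mkQ (g k : ℕ) : Fg g →* Q g k := QuotientGroup.mk' _

/-- Membership in `A₀(F/F_k)`. -/
def IsA0 (g k : ℕ) (φ : MulAut (Q g k)) : Prop :=
  ∃ h : Fg g →* Fg g,
    (∀ a : Fg g, mkQ g k (h a) = φ (mkQ g k a)) ∧
    (omegaG g)⁻¹ * h (omegaG g) ∈ (⊤ : Subgroup (Fg g)).lowerCentralSeries k

/-- The natural projection `F/F_{k+1} → F/F_k`. -/
def projQ (g k : ℕ) : Q g (k + 1) →* Q g k :=
  QuotientGroup.map _ _ (MonoidHom.id _)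
    (fun x hx => (⊤ : Subgroup (Fg g)).lowerCentralSeries_antitone (Nat.sub_le k 1) hx)

/-- if `α_i, β_i ∈ F_n` with `∏_i [α_i,y_i]·[x_i,β_i] ∈ F_{n+2}`, then the
endomorphism `h` with `h(x_i) = x_i·α_i`, `h(y_i) = y_i·β_i` satisfies
`h(ω_g) ≡ ω_g mod F_{n+2}`, induces the identity on `F/F_n`, and induces an
automorphism of `F/F_{n+1}` lying in `A₀(F/F_{n+1})`. -/
theorem realization_in_A0 (g n : ℕ) (hg : 1 ≤ g) (hn : 2 ≤ n)
    (α β : Fin g → Fg g)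
    (hα : ∀ i, α i ∈ (⊤ : Subgroup (Fg g)).lowerCentralSeries (n - 1))
    (hβ : ∀ i, β i ∈ (⊤ : Subgroup (Fg g)).lowerCentralSeries (n - 1))
    (h : Fg g →* Fg g)
    (hx : ∀ i, h (X g i) = X g i * α i)
    (hy : ∀ i, h (Y g i) = Y g i * β i)
    (hprod : ((List.finRange g).map fun i => ⁅α i, Y g i⁆ * ⁅X g i, β i⁆).prod ∈
      (⊤ : Subgroup (Fg g)).lowerCentralSeries (n + 1)) :
    -- `h(ω_g) ≡ ω_g` modulo `F_{n+2}`
    (omegaG g)⁻¹ * h (omegaG g) ∈ (⊤ : Subgroup (Fg g)).lowerCentralSeries (n + 1) ∧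
    -- `h` induces the identity automorphism of `F/F_n`
    (∀ a : Fg g, a⁻¹ * h a ∈ (⊤ : Subgroup (Fg g)).lowerCentralSeries (n - 1)) ∧
    -- `h` induces an automorphism of `F/F_{n+1}` belonging to `A₀(F/F_{n+1})`
    ∃ ψ : MulAut (Q g (n + 1)),
      (∀ a : Fg g, ψ (mkQ g (n + 1) a) = mkQ g (n + 1) (h a)) ∧
      IsA0 g (n + 1) ψ := by
  have hk1 : 1 ≤ n - 1 := by omega
  have hkn : n - 1 + 1 = n := by omega
  -- Part 2
  have part2 : ∀ a : Fg g, a⁻¹ * h a ∈ (⊤ : Subgroup (Fg g)).lowerCentralSeries (n - 1) := by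
    have key : (QuotientGroup.mk' ((⊤ : Subgroup (Fg g)).lowerCentralSeries (n-1))).comp h
        = QuotientGroup.mk' ((⊤ : Subgroup (Fg g)).lowerCentralSeries (n-1)) := by
      apply FreeGroup.ext_hom
      rintro ⟨i, b⟩
      cases b
      · show QuotientGroup.mk' _ (h (X g i)) = QuotientGroup.mk' _ (X g i)
        rw [hx, map_mul]
        simp only [QuotientGroup.mk'_apply]
        rw [(QuotientGroup.eq_one_iff _).mpr (hα i), mul_one]
      · show QuotientGroup.mk' _ (h (Y g i)) = QuotientGroup.mk' _ (Y g i)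
        rw [hy, map_mul]
        simp only [QuotientGroup.mk'_apply]
        rw [(QuotientGroup.eq_one_iff _).mpr (hβ i), mul_one]
    intro a
    have := DFunLike.congr_fun key a
    exact QuotientGroup.eq.mp this.symm
  -- Part 1
  have part1 : (omegaG g)⁻¹ * h (omegaG g) ∈ (⊤ : Subgroup (Fg g)).lowerCentralSeries (n + 1) := by
    set π := QuotientGroup.mk' ((⊤ : Subgroup (Fg g)).lowerCentralSeries (n+1)) with hπ
    have hcent : ∀ z ∈ (⊤ : Subgroup (Fg g)).lowerCentralSeries n,
        π z ∈ Subgroup.center (Fg g ⧸ (⊤ : Subgroup (Fg g)).lowerCentralSeries (n+1)) :=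
      fun z hz => central_of_lcs n hz
    have hhω : h (omegaG g)
        = ((List.finRange g).map fun i => ⁅X g i * α i, Y g i * β i⁆).prod := by
      rw [omegaG, map_list_prod, List.map_map]
      have e0 : (⇑h ∘ fun i => ⁅X g i, Y g i⁆) = fun i => ⁅X g i * α i, Y g i * β i⁆ := by
        funext i
        simp only [Function.comp_apply, map_commutatorElement, hx, hy]
      rw [e0]
    have hay : ∀ i, ⁅α i, Y g i⁆ ∈ (⊤ : Subgroup (Fg g)).lowerCentralSeries n := by
      intro i
      have : ⁅α i, Y g i⁆ ∈ ⁅(⊤ : Subgroup (Fg g)).lowerCentralSeries (n-1), (⊤ : Subgroup (Fg g)).lowerCentralSeries 0⁆ :=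
        Subgroup.commutator_mem_commutator (hα i) (Subgroup.mem_top _)
      exact (⊤ : Subgroup _).lowerCentralSeries_antitone (by omega) (lcs_comm_le 0 (n-1) this)
    have hxb : ∀ i, ⁅X g i, β i⁆ ∈ (⊤ : Subgroup (Fg g)).lowerCentralSeries n := by
      intro i
      have : ⁅X g i, β i⁆ ∈ ⁅(⊤ : Subgroup (Fg g)).lowerCentralSeries 0, (⊤ : Subgroup (Fg g)).lowerCentralSeries (n-1)⁆ :=
        Subgroup.commutator_mem_commutator (Subgroup.mem_top _) (hβ i)
      exact (⊤ : Subgroup _).lowerCentralSeries_antitone (by omega) (lcs_comm_le (n-1) 0 this)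
    have hA : ∀ i, ⁅α i, Y g i⁆ * ⁅X g i, β i⁆ ∈ (⊤ : Subgroup (Fg g)).lowerCentralSeries n :=
      fun i => mul_mem (hay i) (hxb i)
    have per_i : ∀ i, π ⁅X g i * α i, Y g i * β i⁆
        = π ⁅X g i, Y g i⁆ * π (⁅α i, Y g i⁆ * ⁅X g i, β i⁆) := by
      intro i
      have hab : π ⁅α i, β i⁆ = 1 := by
        apply (QuotientGroup.eq_one_iff _).mpr
        have : ⁅α i, β i⁆ ∈ ⁅(⊤ : Subgroup (Fg g)).lowerCentralSeries (n-1), (⊤ : Subgroup (Fg g)).lowerCentralSeries (n-1)⁆ :=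
          Subgroup.commutator_mem_commutator (hα i) (hβ i)
        exact (⊤ : Subgroup _).lowerCentralSeries_antitone (by omega) (lcs_comm_le (n-1) (n-1) this)
      have expand : π ⁅X g i * α i, Y g i * β i⁆
          = π (X g i * ⁅α i, Y g i⁆ * (X g i)⁻¹)
            * π (X g i * Y g i * ⁅α i, β i⁆ * (Y g i)⁻¹ * (X g i)⁻¹)
            * π ⁅X g i, Y g i⁆
            * π (Y g i * ⁅X g i, β i⁆ * (Y g i)⁻¹) := by
        rw [← map_mul, ← map_mul, ← map_mul]
        congr 1
        simp only [commutatorElement_def]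
        group
      have c1 : π (X g i * ⁅α i, Y g i⁆ * (X g i)⁻¹) = π ⁅α i, Y g i⁆ := by
        rw [map_mul, map_mul, map_inv]
        exact conj_central (hcent _ (hay i)) (π (X g i))
      have c2 : π (X g i * Y g i * ⁅α i, β i⁆ * (Y g i)⁻¹ * (X g i)⁻¹) = 1 := by
        rw [map_mul, map_mul, map_mul, map_mul, map_inv, map_inv, hab]
        group
      have c3 : π (Y g i * ⁅X g i, β i⁆ * (Y g i)⁻¹) = π ⁅X g i, β i⁆ := by
        rw [map_mul, map_mul, map_inv]
        exact conj_central (hcent _ (hxb i)) (π (Y g i))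
      rw [expand, c1, c2, c3, mul_one, map_mul]
      have swap : π ⁅α i, Y g i⁆ * π ⁅X g i, Y g i⁆
          = π ⁅X g i, Y g i⁆ * π ⁅α i, Y g i⁆ :=
        (Subgroup.mem_center_iff.mp (hcent _ (hay i)) (π ⁅X g i, Y g i⁆)).symm
      rw [swap, mul_assoc]
    have main : π (h (omegaG g)) = π (omegaG g) := by
      rw [hhω, map_list_prod, List.map_map]
      have e1 : (⇑π ∘ fun i => ⁅X g i * α i, Y g i * β i⁆)
          = fun i => π ⁅X g i, Y g i⁆ * π (⁅α i, Y g i⁆ * ⁅X g i, β i⁆) := by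
        funext i; exact per_i i
      rw [e1, prod_mul_central _ _ (fun i => hcent _ (hA i)) (List.finRange g)]
      have e2 : (List.map (fun i => π (⁅α i, Y g i⁆ * ⁅X g i, β i⁆)) (List.finRange g)).prod
          = 1 := by
        rw [show (fun i => π (⁅α i, Y g i⁆ * ⁅X g i, β i⁆))
            = ⇑π ∘ (fun i => ⁅α i, Y g i⁆ * ⁅X g i, β i⁆) from rfl,
          ← List.map_map, ← map_list_prod]
        exact (QuotientGroup.eq_one_iff _).mpr hprod
      have e3 : (List.map (fun i => π ⁅X g i, Y g i⁆) (List.finRange g)).prod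
          = π (omegaG g) := by
        rw [show (fun i => π ⁅X g i, Y g i⁆) = ⇑π ∘ (fun i => ⁅X g i, Y g i⁆) from rfl,
          ← List.map_map, ← map_list_prod, omegaG]
      rw [e2, e3, mul_one]
    exact QuotientGroup.eq.mp main.symm
  refine ⟨part1, part2, ?_⟩
  -- Part 3
  have hmapQ : (⊤ : Subgroup (Fg g)).lowerCentralSeries (n + 1 - 1) ≤
      Subgroup.comap h ((⊤ : Subgroup (Fg g)).lowerCentralSeries (n + 1 - 1)) := by
    intro x hx'
    exact Subgroup.lowerCentralSeries.map h _ (Subgroup.mem_map_of_mem h hx')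
  set hbar : Q g (n+1) →* Q g (n+1) :=
    QuotientGroup.map _ _ h hmapQ with hhbar
  have hbar_mk : ∀ a : Fg g, hbar (mkQ g (n+1) a) = mkQ g (n+1) (h a) := fun a => rfl
  have hbot : (⊤ : Subgroup (Q g (n+1))).lowerCentralSeries n = ⊥ := by
    have hb0 : Subgroup.map (QuotientGroup.mk' ((⊤ : Subgroup (Fg g)).lowerCentralSeries (n+1-1)))
        ((⊤ : Subgroup (Fg g)).lowerCentralSeries n) = ⊥ := by
      rw [Subgroup.map_eq_bot_iff, QuotientGroup.ker_mk']
      exact (⊤ : Subgroup _).lowerCentralSeries_antitone (by omega)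
    rw [eq_bot_iff]
    exact (lcs_quotient_le _ n).trans (le_of_eq hb0)
  have huni : ∀ q : Q g (n+1), q⁻¹ * hbar q ∈ (⊤ : Subgroup (Q g (n+1))).lowerCentralSeries (n-1) := by
    intro q
    obtain ⟨a, rfl⟩ := QuotientGroup.mk'_surjective _ q
    have : (mkQ g (n+1) a)⁻¹ * hbar (mkQ g (n+1) a) = mkQ g (n+1) (a⁻¹ * h a) := by
      rw [hbar_mk, map_mul, map_inv]
    rw [show (QuotientGroup.mk' ((⊤ : Subgroup (Fg g)).lowerCentralSeries (n + 1 - 1))) a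
        = mkQ g (n+1) a from rfl, this]
    exact Subgroup.lowerCentralSeries.map (mkQ g (n+1)) (n-1)
      (Subgroup.mem_map_of_mem _ (part2 a))
  have hbij : Function.Bijective hbar :=
    bij_of_unipotent hbar (n-1) n hk1 hbot huni
  refine ⟨MulEquiv.ofBijective hbar hbij, ?_, ?_⟩
  · intro a
    exact hbar_mk a
  · exact ⟨h, fun a => (hbar_mk a).symm, part1⟩
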